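/- Let p* ∈ Δ^K, let c_1,…,c_K be nonnegative integers with ∑_{i=1}^K c_i = n, and let γ_1,…,γ_K ≥ 0. Define p̄(i) = c_i/n and p̃(i) = (c_i + γ_i)/(n + ∑_{j=1}^K γ_j). Then h²(p*, p̃) ≤ h²(p*, p̄) + (∑_{i=1}^K γ_i)/(2n), where h²(p, q) = 1 − ∑_{i=1}^K √(p(i)·q(i)) is the halved squared Hellinger distance (equivalently h²(p,q) = (1/2)·∑_{i=1}^K (√p(i) − √q(i))²). -/

import Mathlib

open scoped ENNReal
open MeasureTheory

/-- The probability simplex on `Fin K`. -/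
def simplex (K : ℕ) : Set (Fin K → ℝ) :=
  {p | (∀ i, 0 ≤ p i) ∧ ∑ i, p i = 1}

/-- Kullback–Leibler divergence between two vectors on `Fin K`, with the
conventions `0 · log 0 = 0` and value `∞` if `p i > 0 = q i` for some `i`. -/
noncomputable def klD {K : ℕ} (p q : Fin K → ℝ) : ℝ≥0∞ :=
  if ∀ i, 0 < p i → 0 < q i then ENNReal.ofReal (∑ i, p i * Real.log (p i / q i)) else ⊤

/-- The law of `n` i.i.d. samples from the distribution `p` on `Fin K`. -/
noncomputable def iidMeasure (n K : ℕ) (p : Fin K → ℝ) : Measure (Fin n → Fin K) :=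
  ∑ x : Fin n → Fin K, (∏ t, ENNReal.ofReal (p (x t))) • Measure.dirac x

/-- `countTo x t i` is the number of indices `s` among the first `t` samples with `x s = i`. -/
def countTo {n K : ℕ} (x : Fin n → Fin K) (t : ℕ) (i : Fin K) : ℕ :=
  (Finset.univ.filter (fun s : Fin n => (s : ℕ) < t ∧ x s = i)).card

/-- adding `γᵢ`-bias increases the (halved squared) Hellinger distance
by at most `(∑ γᵢ)/(2n)`. -/
theorem hellinger_bias (K n : ℕ) (hK : 2 ≤ K) (hn : 1 ≤ n)
    (pstar : Fin K → ℝ) (hp : pstar ∈ simplex K)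
    (c : Fin K → ℕ) (hc : ∑ i, c i = n)
    (γ : Fin K → ℝ) (hγ : ∀ i, 0 ≤ γ i) :
    1 - ∑ i, Real.sqrt (pstar i * (((c i : ℝ) + γ i) / ((n : ℝ) + ∑ j, γ j))) ≤
      (1 - ∑ i, Real.sqrt (pstar i * ((c i : ℝ) / n))) + (∑ i, γ i) / (2 * n) := by
  simp only [simplex, Set.mem_setOf_eq] at hp
  obtain ⟨hp0, hp1⟩ := hp
  set S : ℝ := ∑ j, γ j with hSdef
  have hS : 0 ≤ S := Finset.sum_nonneg fun i _ => hγ i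
  have hn' : (0:ℝ) < n := by exact_mod_cast hn
  have hnS : (0:ℝ) < (n:ℝ) + S := by linarith
  set r : ℝ := Real.sqrt ((n:ℝ) / ((n:ℝ) + S)) with hrdef
  have hr0 : 0 ≤ r := Real.sqrt_nonneg _
  have hr2 : r ^ 2 = (n:ℝ) / ((n:ℝ) + S) := Real.sq_sqrt (by positivity)
  have hr2' : r ^ 2 * ((n:ℝ) + S) = n := by rw [hr2]; field_simp
  have hr1 : r ≤ 1 := by
    rw [hrdef]
    rw [show (1:ℝ) = Real.sqrt 1 by simp]
    apply Real.sqrt_le_sqrt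
    rw [div_le_one hnS]; linarith
  have hr3 : (n:ℝ) ≤ r * ((n:ℝ) + S) := by nlinarith
  have hkey : 1 - r ≤ S / (2 * n) := by
    rw [le_div_iff₀ (by positivity)]
    nlinarith [mul_nonneg (sub_nonneg.2 hr1) (by linarith : (0:ℝ) ≤ (1+r)*((n:ℝ)+S) - 2*n)]
  set A : ℝ := ∑ i, Real.sqrt (pstar i * ((c i : ℝ) / n)) with hAdef
  have hA0 : 0 ≤ A := Finset.sum_nonneg fun i _ => Real.sqrt_nonneg _
  have hcn : ∑ i, ((c i : ℝ) / n) = 1 := by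
    rw [← Finset.sum_div]
    rw [div_eq_one_iff_eq (ne_of_gt hn')]
    exact_mod_cast hc
  have hA1 : A ≤ 1 := by
    have : A ≤ ∑ i, (pstar i + (c i : ℝ) / n) / 2 := by
      apply Finset.sum_le_sum
      intro i _
      have h1 : 0 ≤ pstar i := hp0 i
      have h2 : (0:ℝ) ≤ (c i : ℝ) / n := by positivity
      rw [Real.sqrt_mul h1]
      nlinarith [sq_nonneg (Real.sqrt (pstar i) - Real.sqrt ((c i : ℝ)/n)),
        Real.sq_sqrt h1, Real.sq_sqrt h2, Real.sqrt_nonneg (pstar i),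
        Real.sqrt_nonneg ((c i : ℝ)/n)]
    calc A ≤ ∑ i, (pstar i + (c i : ℝ) / n) / 2 := this
    _ = 1 := by rw [← Finset.sum_div, Finset.sum_add_distrib, hp1, hcn]; norm_num
  have hsum : r * A ≤ ∑ i, Real.sqrt (pstar i * (((c i : ℝ) + γ i) / ((n:ℝ) + S)) ) := by
    rw [hAdef, Finset.mul_sum]
    apply Finset.sum_le_sum
    intro i _
    have h1 : 0 ≤ pstar i := hp0 i
    have heq : r * Real.sqrt (pstar i * ((c i : ℝ) / n))
        = Real.sqrt (pstar i * ((c i : ℝ) / ((n:ℝ) + S))) := by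
      rw [hrdef, ← Real.sqrt_mul (by positivity)]
      congr 1
      field_simp
    rw [heq]
    apply Real.sqrt_le_sqrt
    gcongr
    linarith [hγ i]
  nlinarith [mul_nonneg (sub_nonneg.2 hA1) (sub_nonneg.2 hr1), mul_nonneg hA0 hr0]
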